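/- Let $\mathcal N$ denote the standard normal CDF, $c_1 > 0$, $\lambda > 0$ with $c_1^2 < 2\lambda$, and $t < T$. Then $\lambda e^{\lambda t}\int_t^T \mathcal N(c_1\sqrt{T-u}) e^{-\lambda u}\, du = \mathcal N(c_1\sqrt{T-t}) - e^{-\lambda(T-t)}\Big[\frac 12 + \frac{c_1}{\sqrt{2\lambda - c_1^2}} \int_0^{\sqrt{(2\lambda - c_1^2)(T-t)}} \frac{e^{z^2/2}}{\sqrt{2\pi}}\, dz\Big].$ -/

import Mathlib

/-- The standard normal cumulative distribution function. -/
noncomputable def stdNormalCDF (x : ℝ) : ℝ :=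
  ∫ z in Set.Iic x, Real.exp (-z ^ 2 / 2) / Real.sqrt (2 * Real.pi)

open MeasureTheory Set Filter intervalIntegral

noncomputable def gaussPDF (z : ℝ) : ℝ := Real.exp (-z ^ 2 / 2) / Real.sqrt (2 * Real.pi)

noncomputable def gaussE (z : ℝ) : ℝ := Real.exp (z ^ 2 / 2) / Real.sqrt (2 * Real.pi)

lemma gaussPDF_cont : Continuous gaussPDF := by
  unfold gaussPDF; fun_prop

lemma gaussE_cont : Continuous gaussE := by
  unfold gaussE; fun_prop

lemma gaussPDF_integrable : Integrable gaussPDF := by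
  have h : Integrable (fun z : ℝ => Real.exp (-(1/2 : ℝ) * z ^ 2)) :=
    integrable_exp_neg_mul_sq (by norm_num)
  have h2 := h.div_const (Real.sqrt (2 * Real.pi))
  convert h2 using 2 with z
  unfold gaussPDF
  ring_nf

lemma stdNormalCDF_eq (x : ℝ) :
    stdNormalCDF x = stdNormalCDF 0 + ∫ z in (0:ℝ)..x, gaussPDF z := by
  have h := intervalIntegral.integral_Iic_sub_Iic (μ := volume) (f := gaussPDF)
      (a := 0) (b := x) gaussPDF_integrable.integrableOn gaussPDF_integrable.integrableOn
  have h1 : stdNormalCDF x = ∫ z in Iic x, gaussPDF z := rfl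
  have h2 : stdNormalCDF 0 = ∫ z in Iic (0:ℝ), gaussPDF z := rfl
  rw [h1, h2]
  linarith [h]

lemma stdNormalCDF_hasDerivAt (x : ℝ) : HasDerivAt stdNormalCDF (gaussPDF x) x := by
  have h : HasDerivAt (fun y => ∫ z in (0:ℝ)..y, gaussPDF z) (gaussPDF x) x :=
    intervalIntegral.integral_hasDerivAt_right
      (gaussPDF_integrable.intervalIntegrable)
      (gaussPDF_cont.stronglyMeasurableAtFilter _ _)
      gaussPDF_cont.continuousAt
  have hfun : stdNormalCDF = fun y => stdNormalCDF 0 + ∫ z in (0:ℝ)..y, gaussPDF z :=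
    funext stdNormalCDF_eq
  rw [hfun]
  simpa using h

lemma stdNormalCDF_continuous : Continuous stdNormalCDF :=
  continuous_iff_continuousAt.mpr fun x => (stdNormalCDF_hasDerivAt x).continuousAt

lemma gaussPDF_integral : ∫ z, gaussPDF z = 1 := by
  unfold gaussPDF
  have h : ∀ z : ℝ, Real.exp (-z ^ 2 / 2) / Real.sqrt (2 * Real.pi)
      = Real.exp (-(1/2 : ℝ) * z ^ 2) / Real.sqrt (2 * Real.pi) := by
    intro z; ring_nf
  simp_rw [h]
  rw [MeasureTheory.integral_div, integral_gaussian]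
  rw [show (Real.pi / (1/2)) = 2 * Real.pi by ring]
  rw [div_self]
  positivity

lemma stdNormalCDF_zero : stdNormalCDF 0 = 1 / 2 := by
  have hIic : stdNormalCDF 0 = ∫ z in Iic (0:ℝ), gaussPDF z := rfl
  have hsymm : ∫ z in Iic (0:ℝ), gaussPDF z = ∫ z in Ioi (0:ℝ), gaussPDF z := by
    have hcn := integral_comp_neg_Iic (0:ℝ) gaussPDF
    rw [neg_zero] at hcn
    rw [← hcn]
    refine setIntegral_congr_fun measurableSet_Iic (fun z _ => ?_)
    unfold gaussPDF
    rw [neg_pow]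
    norm_num
  have hsplit : (∫ z in Iic (0:ℝ), gaussPDF z) + ∫ z in Ioi (0:ℝ), gaussPDF z
      = ∫ z, gaussPDF z := by
    rw [← setIntegral_union (Iic_disjoint_Ioi le_rfl) measurableSet_Ioi
      gaussPDF_integrable.integrableOn gaussPDF_integrable.integrableOn,
      Iic_union_Ioi, setIntegral_univ]
  rw [gaussPDF_integral, ← hsymm] at hsplit
  rw [hIic]
  linarith

lemma gaussE_hasDerivAt (y : ℝ) :
    HasDerivAt (fun y => ∫ z in (0:ℝ)..y, gaussE z) (gaussE y) y :=
  intervalIntegral.integral_hasDerivAt_right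
    (gaussE_cont.intervalIntegrable _ _)
    (gaussE_cont.stronglyMeasurableAtFilter _ _)
    gaussE_cont.continuousAt

/-- Explicit value of `A₁(t,T)` in the case `c₁² < 2λ`. -/
theorem A1_case_lt (c₁ l t T : ℝ) (hc₁ : 0 < c₁) (hl : 0 < l)
    (hcase : c₁ ^ 2 < 2 * l) (htT : t < T) :
    l * Real.exp (l * t) *
        ∫ u in t..T, stdNormalCDF (c₁ * Real.sqrt (T - u)) * Real.exp (-l * u)
      = stdNormalCDF (c₁ * Real.sqrt (T - t))
        - Real.exp (-l * (T - t)) * (1 / 2 + c₁ / Real.sqrt (2 * l - c₁ ^ 2)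
            * ∫ z in (0:ℝ)..Real.sqrt ((2 * l - c₁ ^ 2) * (T - t)),
                Real.exp (z ^ 2 / 2) / Real.sqrt (2 * Real.pi)) := by
  set a : ℝ := 2 * l - c₁ ^ 2 with ha_def
  have ha : 0 < a := by simp [ha_def]; linarith
  set k : ℝ := c₁ / Real.sqrt a with hk_def
  set F : ℝ → ℝ := fun u =>
    -(Real.exp (-l * u) * stdNormalCDF (c₁ * Real.sqrt (T - u)))
      + Real.exp (-l * T) * (1 / 2)
      + Real.exp (-l * T) * k * ∫ z in (0:ℝ)..Real.sqrt (a * (T - u)), gaussE z with hF_def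
  set f' : ℝ → ℝ := fun u =>
    l * Real.exp (-l * u) * stdNormalCDF (c₁ * Real.sqrt (T - u)) with hf'_def
  -- derivative on the open interval
  have hderiv : ∀ u ∈ Ioo t T, HasDerivAt F (f' u) u := by
    intro u hu
    have hs : 0 < T - u := by linarith [hu.2]
    have hsub : HasDerivAt (fun u : ℝ => T - u) (-1) u := by
      simpa using (hasDerivAt_id u).const_sub T
    have hsqrtTu : HasDerivAt (fun u : ℝ => Real.sqrt (T - u))
        (1 / (2 * Real.sqrt (T - u)) * (-1)) u :=
      (Real.hasDerivAt_sqrt hs.ne').comp u hsub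
    have hc1sqrt : HasDerivAt (fun u : ℝ => c₁ * Real.sqrt (T - u))
        (c₁ * (1 / (2 * Real.sqrt (T - u)) * (-1))) u := hsqrtTu.const_mul c₁
    have hN : HasDerivAt (fun u : ℝ => stdNormalCDF (c₁ * Real.sqrt (T - u)))
        (gaussPDF (c₁ * Real.sqrt (T - u)) * (c₁ * (1 / (2 * Real.sqrt (T - u)) * (-1)))) u :=
      (stdNormalCDF_hasDerivAt _).comp u hc1sqrt
    have hexp : HasDerivAt (fun u : ℝ => Real.exp (-l * u))
        (Real.exp (-l * u) * (-l * 1)) u :=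
      ((hasDerivAt_id u).const_mul (-l)).exp
    have hIin : HasDerivAt (fun u : ℝ => a * (T - u)) (a * -1) u := hsub.const_mul a
    have hsqa : HasDerivAt (fun u : ℝ => Real.sqrt (a * (T - u)))
        (1 / (2 * Real.sqrt (a * (T - u))) * (a * -1)) u :=
      (Real.hasDerivAt_sqrt (mul_pos ha hs).ne').comp u hIin
    have hI : HasDerivAt (fun u : ℝ => ∫ z in (0:ℝ)..Real.sqrt (a * (T - u)), gaussE z)
        (gaussE (Real.sqrt (a * (T - u))) * (1 / (2 * Real.sqrt (a * (T - u))) * (a * -1))) u :=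
      (gaussE_hasDerivAt _).comp u hsqa
    have hFd : HasDerivAt F
        (-(Real.exp (-l * u) * (-l * 1) * stdNormalCDF (c₁ * Real.sqrt (T - u))
            + Real.exp (-l * u) *
              (gaussPDF (c₁ * Real.sqrt (T - u)) * (c₁ * (1 / (2 * Real.sqrt (T - u)) * (-1)))))
          + Real.exp (-l * T) * k *
            (gaussE (Real.sqrt (a * (T - u))) * (1 / (2 * Real.sqrt (a * (T - u))) * (a * -1)))) u := by
      exact (((hexp.mul hN).neg.add_const (Real.exp (-l * T) * (1 / 2))).add
        (hI.const_mul (Real.exp (-l * T) * k)))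
    convert hFd using 1
    -- arithmetic identity including the cancellation
    have hsS : (0:ℝ) < Real.sqrt (T - u) := Real.sqrt_pos.mpr hs
    have hsA : (0:ℝ) < Real.sqrt a := Real.sqrt_pos.mpr ha
    have hsplit : Real.sqrt (a * (T - u)) = Real.sqrt a * Real.sqrt (T - u) :=
      Real.sqrt_mul ha.le _
    have hAA : Real.sqrt a * Real.sqrt a = a := Real.mul_self_sqrt ha.le
    have hsq1 : (c₁ * Real.sqrt (T - u)) ^ 2 = c₁ ^ 2 * (T - u) := by
      rw [mul_pow, Real.sq_sqrt hs.le]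
    have hsq2 : (Real.sqrt (a * (T - u))) ^ 2 = a * (T - u) :=
      Real.sq_sqrt (mul_pos ha hs).le
    have key : Real.exp (-l * u) * Real.exp (-(c₁ * Real.sqrt (T - u)) ^ 2 / 2)
        = Real.exp (-l * T) * Real.exp ((Real.sqrt (a * (T - u))) ^ 2 / 2) := by
      rw [← Real.exp_add, ← Real.exp_add, hsq1, hsq2]
      congr 1
      rw [ha_def]
      ring
    have hcoef : c₁ * (1 / (2 * Real.sqrt (T - u)))
        = k * (1 / (2 * Real.sqrt (a * (T - u))) * a) := by
      rw [hsplit, hk_def]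
      rw [show c₁ / Real.sqrt a * (1 / (2 * (Real.sqrt a * Real.sqrt (T - u))) * a) = c₁ * (1 / (2 * Real.sqrt (T - u))) * (a / (Real.sqrt a * Real.sqrt a)) by ring, hAA, div_self ha.ne', mul_one]
    have cancel : Real.exp (-l * u) *
          (Real.exp (-(c₁ * Real.sqrt (T - u)) ^ 2 / 2) / Real.sqrt (2 * Real.pi)
            * (c₁ * (1 / (2 * Real.sqrt (T - u)) * (-1))))
        = Real.exp (-l * T) * k *
          (Real.exp ((Real.sqrt (a * (T - u))) ^ 2 / 2) / Real.sqrt (2 * Real.pi)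
            * (1 / (2 * Real.sqrt (a * (T - u))) * (a * -1))) := by
      linear_combination (-(c₁ * (1 / (2 * Real.sqrt (T - u))) / Real.sqrt (2 * Real.pi))) * key
        + (-(Real.exp (-l * T) * Real.exp ((Real.sqrt (a * (T - u))) ^ 2 / 2)
            / Real.sqrt (2 * Real.pi))) * hcoef
    unfold gaussPDF gaussE
    rw [hf'_def]
    linear_combination cancel
  -- continuity of F
  have hNc : Continuous fun u : ℝ => stdNormalCDF (c₁ * Real.sqrt (T - u)) :=
    stdNormalCDF_continuous.comp (by fun_prop)
  have hec : Continuous fun u : ℝ => Real.exp (-l * u) := by fun_prop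
  have hFcont : Continuous F := by
    have h1 : Continuous fun u : ℝ => ∫ z in (0:ℝ)..Real.sqrt (a * (T - u)), gaussE z := by
      have hcy : Continuous fun y : ℝ => ∫ z in (0:ℝ)..y, gaussE z :=
        continuous_iff_continuousAt.mpr fun y => (gaussE_hasDerivAt y).continuousAt
      exact hcy.comp (Real.continuous_sqrt.comp (by fun_prop))
    rw [hF_def]
    exact (((hec.mul hNc).neg.add continuous_const).add (continuous_const.mul h1))
  have hint : IntervalIntegrable f' volume t T := by
    apply Continuous.intervalIntegrable
    rw [hf'_def]
    exact (continuous_const.mul hec).mul hNc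
  have hkey := intervalIntegral.integral_eq_sub_of_hasDerivAt_of_tendsto htT hderiv hint
      ((hFcont.continuousAt).tendsto.mono_left nhdsWithin_le_nhds)
      ((hFcont.continuousAt).tendsto.mono_left nhdsWithin_le_nhds)
  -- F T = 0
  have hFT : F T = 0 := by
    rw [hF_def]
    simp [stdNormalCDF_zero]
  -- relate the integral
  have hlint : ∫ u in t..T, f' u
      = l * ∫ u in t..T, stdNormalCDF (c₁ * Real.sqrt (T - u)) * Real.exp (-l * u) := by
    rw [← intervalIntegral.integral_const_mul]
    apply intervalIntegral.integral_congr
    intro x _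
    rw [hf'_def]
    ring
  rw [hFT] at hkey
  rw [hlint] at hkey
  have e1 : Real.exp (l * t) * Real.exp (-l * t) = 1 := by
    rw [← Real.exp_add]; norm_num
  have e2 : Real.exp (l * t) * Real.exp (-l * T) = Real.exp (-l * (T - t)) := by
    rw [← Real.exp_add]; ring_nf
  have hFt : F t = -(Real.exp (-l * t) * stdNormalCDF (c₁ * Real.sqrt (T - t)))
      + Real.exp (-l * T) * (1 / 2)
      + Real.exp (-l * T) * k * ∫ z in (0:ℝ)..Real.sqrt (a * (T - t)), gaussE z := rfl
  have hgoal : l * Real.exp (l * t) *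
      ∫ u in t..T, stdNormalCDF (c₁ * Real.sqrt (T - u)) * Real.exp (-l * u)
      = Real.exp (l * t) * (0 - F t) := by
    rw [← hkey]; ring
  rw [hgoal, hFt]
  unfold gaussE
  rw [hk_def]
  linear_combination stdNormalCDF (c₁ * Real.sqrt (T - t)) * e1
    - (1 / 2 + (c₁ / Real.sqrt a) *
        ∫ z in (0:ℝ)..Real.sqrt (a * (T - t)), Real.exp (z ^ 2 / 2) / Real.sqrt (2 * Real.pi)) * e2
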